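/- arXiv:1207.3265 — 3 statements merged into one kernel-verified Lean document; each statement's English description precedes it below -/
import Mathlib

section
/- Suppose θ–W–(X,Y) and θ–T(W)–W are Markov chains, X and Y are conditionally independent given T(W), and T_x(X) is locally sufficient for T(W) given X (T(W)–T_x(X)–X is a Markov chain) and T_y(Y) is locally sufficient for T(W) given Y (T(W)–T_y(Y)–Y is a Markov chain). Then (T_x(X), T_y(Y)) is globally sufficient for θ: θ–(T_x(X),T_y(Y))–(X,Y) is a Markov chain. -/
open scoped Classical BigOperators

/-- Probability of a set of outcomes under a pmf `p` on a finite sample space. -/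
noncomputable def pr {Ω : Type*} [Fintype Ω] (p : Ω → ℝ) (s : Set Ω) : ℝ :=
  ∑ ω, if ω ∈ s then p ω else 0

/-- `p` is a probability mass function on the finite sample space `Ω`. -/
def IsPMF {Ω : Type*} [Fintype Ω] (p : Ω → ℝ) : Prop :=
  (∀ ω, 0 ≤ p ω) ∧ (∑ ω, p ω) = 1

/-- The Markov chain `A – B – C`: `A` and `C` are conditionally independent given `B`. -/
def MarkovChain {Ω α β γ : Type*} [Fintype Ω] (p : Ω → ℝ)
    (A : Ω → α) (B : Ω → β) (C : Ω → γ) : Prop :=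
  ∀ (a : α) (b : β) (c : γ),
    pr p {ω | A ω = a ∧ B ω = b ∧ C ω = c} * pr p {ω | B ω = b} =
      pr p {ω | A ω = a ∧ B ω = b} * pr p {ω | B ω = b ∧ C ω = c}

section helpers
variable {Ω : Type*} [Fintype Ω]

lemma pr_congr (p : Ω → ℝ) (s t : Set Ω) (h : ∀ ω, ω ∈ s ↔ ω ∈ t) : pr p s = pr p t := by
  have : s = t := Set.ext h
  rw [this]

lemma pr_nonneg (p : Ω → ℝ) (hp : ∀ ω, 0 ≤ p ω) (s : Set Ω) : 0 ≤ pr p s := by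
  unfold pr
  apply Finset.sum_nonneg
  intro ω _
  by_cases h : ω ∈ s <;> simp [h, hp ω]

lemma pr_mono (p : Ω → ℝ) (hp : ∀ ω, 0 ≤ p ω) (s t : Set Ω) (h : ∀ ω, ω ∈ s → ω ∈ t) :
    pr p s ≤ pr p t := by
  unfold pr
  apply Finset.sum_le_sum
  intro ω _
  by_cases hs : ω ∈ s
  · simp [hs, h ω hs]
  · by_cases ht : ω ∈ t <;> simp [hs, ht, hp ω]

lemma pr_zero (p : Ω → ℝ) (hp : ∀ ω, 0 ≤ p ω) (s t : Set Ω) (h : ∀ ω, ω ∈ s → ω ∈ t)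
    (ht : pr p t = 0) : pr p s = 0 :=
  le_antisymm (ht ▸ pr_mono p hp s t h) (pr_nonneg p hp s)

lemma pr_empty (p : Ω → ℝ) (s : Set Ω) (h : ∀ ω, ω ∉ s) : pr p s = 0 := by
  unfold pr; apply Finset.sum_eq_zero; intro ω _; simp [h ω]

lemma pr_sum_fiber {β : Type*} (p : Ω → ℝ) (E : β → Set Ω) (E' : Set Ω) (f : Ω → β)
    (s : Finset β) (h : ∀ ω b, b ∈ s → (ω ∈ E b ↔ (ω ∈ E' ∧ f ω = b)))
    (h' : ∀ ω, ω ∈ E' → f ω ∈ s) :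
    ∑ b ∈ s, pr p (E b) = pr p E' := by
  classical
  rw [Finset.sum_congr rfl
    (fun b hb => pr_congr p (E b) {ω | ω ∈ E' ∧ f ω = b} (fun ω => h ω b hb))]
  unfold pr
  rw [Finset.sum_comm]
  refine Finset.sum_congr rfl fun ω _ => ?_
  by_cases hω : ω ∈ E'
  · simp only [Set.mem_setOf_eq, hω, true_and]
    rw [Finset.sum_ite_eq s (f ω) (fun _ => p ω)]
    simp [h' ω hω]
  · simp [Set.mem_setOf_eq, hω]

lemma markov_symm {α β γ : Type*} (p : Ω → ℝ) {A : Ω → α} {B : Ω → β} {C : Ω → γ}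
    (h : MarkovChain p A B C) : MarkovChain p C B A := by
  intro c b a
  have h1 := h a b c
  have e1 : pr p {ω | C ω = c ∧ B ω = b ∧ A ω = a} = pr p {ω | A ω = a ∧ B ω = b ∧ C ω = c} :=
    pr_congr _ _ _ (fun ω => by simp only [Set.mem_setOf_eq]; tauto)
  have e2 : pr p {ω | C ω = c ∧ B ω = b} = pr p {ω | B ω = b ∧ C ω = c} :=
    pr_congr _ _ _ (fun ω => by simp only [Set.mem_setOf_eq]; tauto)
  have e3 : pr p {ω | B ω = b ∧ A ω = a} = pr p {ω | A ω = a ∧ B ω = b} :=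
    pr_congr _ _ _ (fun ω => by simp only [Set.mem_setOf_eq]; tauto)
  rw [e1, e2, e3]
  linarith [h1]

lemma markov_comp_right {α β γ δ : Type*} (p : Ω → ℝ) {A : Ω → α} {B : Ω → β} {C : Ω → γ}
    (h : MarkovChain p A B C) (g : γ → δ) : MarkovChain p A B (fun ω => g (C ω)) := by
  classical
  intro a b d
  show pr p {ω | A ω = a ∧ B ω = b ∧ g (C ω) = d} * pr p {ω | B ω = b} =
    pr p {ω | A ω = a ∧ B ω = b} * pr p {ω | B ω = b ∧ g (C ω) = d}
  set s : Finset γ := (Finset.univ.image C).filter (fun cc => g cc = d) with hs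
  have hmem : ∀ ω, g (C ω) = d → C ω ∈ s := by
    intro ω hω
    simp [hs, Finset.mem_filter, Finset.mem_image, hω]
  have e1 : pr p {ω | A ω = a ∧ B ω = b ∧ g (C ω) = d} =
      ∑ cc ∈ s, pr p {ω | A ω = a ∧ B ω = b ∧ C ω = cc} := by
    refine (pr_sum_fiber p _ _ C s ?_ ?_).symm
    · intro ω cc hcc
      simp only [hs, Finset.mem_filter] at hcc
      simp only [Set.mem_setOf_eq]
      constructor
      · rintro ⟨u1, u2, u3⟩; exact ⟨⟨u1, u2, by rw [u3]; exact hcc.2⟩, u3⟩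
      · rintro ⟨⟨u1, u2, _⟩, u4⟩; exact ⟨u1, u2, u4⟩
    · intro ω hω
      exact hmem ω hω.2.2
  have e2 : pr p {ω | B ω = b ∧ g (C ω) = d} =
      ∑ cc ∈ s, pr p {ω | B ω = b ∧ C ω = cc} := by
    refine (pr_sum_fiber p _ _ C s ?_ ?_).symm
    · intro ω cc hcc
      simp only [hs, Finset.mem_filter] at hcc
      simp only [Set.mem_setOf_eq]
      constructor
      · rintro ⟨u1, u3⟩; exact ⟨⟨u1, by rw [u3]; exact hcc.2⟩, u3⟩
      · rintro ⟨⟨u1, _⟩, u4⟩; exact ⟨u1, u4⟩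
    · intro ω hω
      exact hmem ω hω.2
  rw [e1, e2, Finset.sum_mul, Finset.mul_sum]
  exact Finset.sum_congr rfl fun cc _ => h a b cc

lemma markov_contraction {α β γ δ : Type*} (p : Ω → ℝ) (hp : ∀ ω, 0 ≤ p ω)
    {A : Ω → α} {B : Ω → β} {C : Ω → γ} {g : β → δ}
    (h1 : MarkovChain p A B C) (h2 : MarkovChain p A (fun ω => g (B ω)) B) :
    MarkovChain p A (fun ω => g (B ω)) C := by
  classical
  intro a t c
  show pr p {ω | A ω = a ∧ g (B ω) = t ∧ C ω = c} * pr p {ω | g (B ω) = t} =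
    pr p {ω | A ω = a ∧ g (B ω) = t} * pr p {ω | g (B ω) = t ∧ C ω = c}
  have key : ∀ b, g b = t →
      pr p {ω | A ω = a ∧ B ω = b ∧ C ω = c} * pr p {ω | g (B ω) = t} =
      pr p {ω | A ω = a ∧ g (B ω) = t} * pr p {ω | B ω = b ∧ C ω = c} := by
    intro b hb
    have E1 : pr p {ω | A ω = a ∧ B ω = b} * pr p {ω | g (B ω) = t} =
        pr p {ω | A ω = a ∧ g (B ω) = t} * pr p {ω | B ω = b} := by
      have h := h2 a t b
      simp only [] at h
      have c1 : pr p {ω | A ω = a ∧ g (B ω) = t ∧ B ω = b} = pr p {ω | A ω = a ∧ B ω = b} :=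
        pr_congr _ _ _ (fun ω => by
          simp only [Set.mem_setOf_eq]
          constructor
          · rintro ⟨u1, _, u3⟩; exact ⟨u1, u3⟩
          · rintro ⟨u1, u3⟩; exact ⟨u1, by rw [u3]; exact hb, u3⟩)
      have c2 : pr p {ω | g (B ω) = t ∧ B ω = b} = pr p {ω | B ω = b} :=
        pr_congr _ _ _ (fun ω => by
          simp only [Set.mem_setOf_eq]
          constructor
          · rintro ⟨_, u3⟩; exact u3
          · intro u3; exact ⟨by rw [u3]; exact hb, u3⟩)
      rw [c1, c2] at h
      exact h
    by_cases hzero : pr p {ω | B ω = b} = 0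
    · have z1 : pr p {ω | A ω = a ∧ B ω = b ∧ C ω = c} = 0 :=
        pr_zero p hp _ {ω | B ω = b} (fun ω hω => hω.2.1) hzero
      have z2 : pr p {ω | B ω = b ∧ C ω = c} = 0 :=
        pr_zero p hp _ {ω | B ω = b} (fun ω hω => hω.1) hzero
      rw [z1, z2]; ring
    · have E2 := h1 a b c
      apply mul_right_cancel₀ hzero
      linear_combination pr p {ω | g (B ω) = t} * E2 + pr p {ω | B ω = b ∧ C ω = c} * E1
  set s : Finset β := (Finset.univ.image B).filter (fun b => g b = t) with hs
  have hmem : ∀ ω, g (B ω) = t → B ω ∈ s := by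
    intro ω hω
    simp [hs, Finset.mem_filter, Finset.mem_image, hω]
  have m1 : pr p {ω | A ω = a ∧ g (B ω) = t ∧ C ω = c} =
      ∑ b ∈ s, pr p {ω | A ω = a ∧ B ω = b ∧ C ω = c} := by
    refine (pr_sum_fiber p _ _ B s ?_ ?_).symm
    · intro ω b hb
      simp only [hs, Finset.mem_filter] at hb
      simp only [Set.mem_setOf_eq]
      constructor
      · rintro ⟨u1, u2, u3⟩; exact ⟨⟨u1, by rw [u2]; exact hb.2, u3⟩, u2⟩
      · rintro ⟨⟨u1, _, u3⟩, u4⟩; exact ⟨u1, u4, u3⟩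
    · intro ω hω; exact hmem ω hω.2.1
  have m2 : pr p {ω | g (B ω) = t ∧ C ω = c} =
      ∑ b ∈ s, pr p {ω | B ω = b ∧ C ω = c} := by
    refine (pr_sum_fiber p _ _ B s ?_ ?_).symm
    · intro ω b hb
      simp only [hs, Finset.mem_filter] at hb
      simp only [Set.mem_setOf_eq]
      constructor
      · rintro ⟨u1, u3⟩; exact ⟨⟨by rw [u1]; exact hb.2, u3⟩, u1⟩
      · rintro ⟨⟨_, u3⟩, u4⟩; exact ⟨u4, u3⟩
    · intro ω hω; exact hmem ω hω.1
  rw [m1, m2, Finset.sum_mul, Finset.mul_sum]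
  exact Finset.sum_congr rfl fun b hb =>
    key b (Finset.mem_filter.mp hb).2
end helpers


lemma algebra_key {𝒯 : Type*} (S : Finset 𝒯) (f F g G q A gx gy Gx Gy : 𝒯 → ℝ)
    (u v px py : ℝ)
    (hfq : ∀ t, f t * q t = A t * g t)
    (hFq : ∀ t, F t * q t = A t * G t)
    (hB : ∀ t, g t * q t = gx t * gy t)
    (hD : ∀ t, G t * q t = Gx t * Gy t)
    (hCx : ∀ t, gx t * u = Gx t * px)
    (hCy : ∀ t, gy t * v = Gy t * py)
    (hq0 : ∀ t, q t = 0 → f t = 0 ∧ F t = 0 ∧ g t = 0 ∧ G t = 0)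
    (hu0 : u = 0 → ∀ t, G t = 0)
    (hv0 : v = 0 → ∀ t, G t = 0) :
    (∑ t ∈ S, f t) * (∑ t ∈ S, G t) = (∑ t ∈ S, F t) * (∑ t ∈ S, g t) := by
  have claim1 : ∀ t s, g t * G s = G t * g s := by
    intro t s
    by_cases hu : u = 0
    · simp [hu0 hu s, hu0 hu t]
    by_cases hv : v = 0
    · simp [hv0 hv s, hv0 hv t]
    by_cases hqt : q t = 0
    · simp [(hq0 t hqt).2.2.1, (hq0 t hqt).2.2.2]
    by_cases hqs : q s = 0
    · simp [(hq0 s hqs).2.2.1, (hq0 s hqs).2.2.2]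
    apply mul_right_cancel₀ (mul_ne_zero (mul_ne_zero hqt hqs) (mul_ne_zero hu hv))
    linear_combination (G s * q s * (u * v)) * hB t + (gx t * gy t * (u * v)) * hD s +
      (gy t * v * (Gx s * Gy s)) * hCx t + (Gx t * px * (Gx s * Gy s)) * hCy t -
      (g s * q s * (u * v)) * hD t - (Gx t * Gy t * (u * v)) * hB s -
      (Gx t * Gy t * gy s * v) * hCx s - (Gx t * Gy t * Gx s * px) * hCy s
  have claim2 : ∀ t s, f t * G s = F t * g s := by
    intro t s
    by_cases hqt : q t = 0
    · simp [(hq0 t hqt).1, (hq0 t hqt).2.1]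
    by_cases hqs : q s = 0
    · simp [(hq0 s hqs).2.2.1, (hq0 s hqs).2.2.2]
    apply mul_right_cancel₀ (mul_ne_zero hqt hqs)
    linear_combination (G s * q s) * hfq t + (A t * q s) * claim1 t s - (g s * q s) * hFq t
  rw [Finset.sum_mul_sum, Finset.sum_mul_sum]
  exact Finset.sum_congr rfl fun t _ => Finset.sum_congr rfl fun s _ => claim2 t s


/-- Theorem 1, part 2: if `θ – W – (X,Y)` and `θ – T(W) – W` are Markov chains, `X` and `Y` are
conditionally independent given `T(W)`, and `T_x(X)`, `T_y(Y)` are locally sufficient for `T(W)`,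
then `(T_x(X), T_y(Y))` is globally sufficient for `θ`. -/
theorem local_sufficiency_implies_global_HCI
    {Ω Θ 𝒲 𝒳 𝒴 𝒯 T₁ T₂ : Type*} [Fintype Ω]
    (p : Ω → ℝ) (hp : IsPMF p)
    (θ : Ω → Θ) (W : Ω → 𝒲) (X : Ω → 𝒳) (Y : Ω → 𝒴)
    (T : 𝒲 → 𝒯) (Tx : 𝒳 → T₁) (Ty : 𝒴 → T₂)
    (h1 : MarkovChain p θ W (fun ω => (X ω, Y ω)))
    (h2 : MarkovChain p θ (fun ω => T (W ω)) W)
    (hci : MarkovChain p X (fun ω => T (W ω)) Y)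
    (hlx : MarkovChain p (fun ω => T (W ω)) (fun ω => Tx (X ω)) X)
    (hly : MarkovChain p (fun ω => T (W ω)) (fun ω => Ty (Y ω)) Y) :
    MarkovChain p θ (fun ω => (Tx (X ω), Ty (Y ω))) (fun ω => (X ω, Y ω)) := by
  classical
  obtain ⟨hp0, -⟩ := hp
  intro a b c
  obtain ⟨t1, t2⟩ := b
  obtain ⟨x, y⟩ := c
  show pr p {ω | θ ω = a ∧ (Tx (X ω), Ty (Y ω)) = (t1, t2) ∧ (X ω, Y ω) = (x, y)} *
      pr p {ω | (Tx (X ω), Ty (Y ω)) = (t1, t2)} =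
    pr p {ω | θ ω = a ∧ (Tx (X ω), Ty (Y ω)) = (t1, t2)} *
      pr p {ω | (Tx (X ω), Ty (Y ω)) = (t1, t2) ∧ (X ω, Y ω) = (x, y)}
  by_cases hx : Tx x = t1
  · by_cases hy : Ty y = t2
    · -- main case
      have hA : MarkovChain p θ (fun ω => T (W ω)) (fun ω => (X ω, Y ω)) :=
        markov_contraction p hp0 h1 h2
      have hA' : MarkovChain p θ (fun ω => T (W ω)) (fun ω => (Tx (X ω), Ty (Y ω))) :=
        markov_comp_right p hA (fun z : 𝒳 × 𝒴 => (Tx z.1, Ty z.2))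
      have hDD : MarkovChain p (fun ω => Tx (X ω)) (fun ω => T (W ω)) (fun ω => Ty (Y ω)) :=
        markov_symm p (markov_comp_right p (markov_symm p (markov_comp_right p hci Ty)) Tx)
      set S : Finset 𝒯 := Finset.univ.image (fun ω => T (W ω)) with hS
      -- canonical quantities
      set f : 𝒯 → ℝ := fun t => pr p {ω | θ ω = a ∧ T (W ω) = t ∧ (X ω = x ∧ Y ω = y)} with hf
      set F : 𝒯 → ℝ := fun t =>
        pr p {ω | θ ω = a ∧ T (W ω) = t ∧ (Tx (X ω) = t1 ∧ Ty (Y ω) = t2)} with hF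
      set g : 𝒯 → ℝ := fun t => pr p {ω | T (W ω) = t ∧ (X ω = x ∧ Y ω = y)} with hg
      set G : 𝒯 → ℝ := fun t =>
        pr p {ω | T (W ω) = t ∧ (Tx (X ω) = t1 ∧ Ty (Y ω) = t2)} with hG
      set q : 𝒯 → ℝ := fun t => pr p {ω | T (W ω) = t} with hq
      set A : 𝒯 → ℝ := fun t => pr p {ω | θ ω = a ∧ T (W ω) = t} with hAq
      set gx : 𝒯 → ℝ := fun t => pr p {ω | T (W ω) = t ∧ X ω = x} with hgx
      set gy : 𝒯 → ℝ := fun t => pr p {ω | T (W ω) = t ∧ Y ω = y} with hgy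
      set Gx : 𝒯 → ℝ := fun t => pr p {ω | T (W ω) = t ∧ Tx (X ω) = t1} with hGx
      set Gy : 𝒯 → ℝ := fun t => pr p {ω | T (W ω) = t ∧ Ty (Y ω) = t2} with hGy
      -- hypotheses of algebra_key
      have hfq : ∀ t, f t * q t = A t * g t := by
        intro t
        have h := hA a t (x, y)
        simp only [Prod.mk.injEq] at h
        exact h
      have hFq : ∀ t, F t * q t = A t * G t := by
        intro t
        have h := hA' a t (t1, t2)
        simp only [Prod.mk.injEq] at h
        exact h
      have hBq : ∀ t, g t * q t = gx t * gy t := by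
        intro t
        have h := hci x t y
        simp only [] at h
        have r1 : pr p {ω | X ω = x ∧ T (W ω) = t ∧ Y ω = y} =
            pr p {ω | T (W ω) = t ∧ (X ω = x ∧ Y ω = y)} :=
          pr_congr _ _ _ (fun ω => by simp only [Set.mem_setOf_eq]; tauto)
        have r2 : pr p {ω | X ω = x ∧ T (W ω) = t} = pr p {ω | T (W ω) = t ∧ X ω = x} :=
          pr_congr _ _ _ (fun ω => by simp only [Set.mem_setOf_eq]; tauto)
        rw [r1, r2] at h
        exact h
      have hDq : ∀ t, G t * q t = Gx t * Gy t := by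
        intro t
        have h := hDD t1 t t2
        simp only [] at h
        have r1 : pr p {ω | Tx (X ω) = t1 ∧ T (W ω) = t ∧ Ty (Y ω) = t2} =
            pr p {ω | T (W ω) = t ∧ (Tx (X ω) = t1 ∧ Ty (Y ω) = t2)} :=
          pr_congr _ _ _ (fun ω => by simp only [Set.mem_setOf_eq]; tauto)
        have r2 : pr p {ω | Tx (X ω) = t1 ∧ T (W ω) = t} =
            pr p {ω | T (W ω) = t ∧ Tx (X ω) = t1} :=
          pr_congr _ _ _ (fun ω => by simp only [Set.mem_setOf_eq]; tauto)
        rw [r1, r2] at h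
        exact h
      have hCx : ∀ t, gx t * pr p {ω | Tx (X ω) = t1} = Gx t * pr p {ω | X ω = x} := by
        intro t
        have h := hlx t t1 x
        simp only [] at h
        have r1 : pr p {ω | T (W ω) = t ∧ Tx (X ω) = t1 ∧ X ω = x} =
            pr p {ω | T (W ω) = t ∧ X ω = x} :=
          pr_congr _ _ _ (fun ω => by
            simp only [Set.mem_setOf_eq]
            constructor
            · rintro ⟨u1, _, u3⟩; exact ⟨u1, u3⟩
            · rintro ⟨u1, u3⟩; exact ⟨u1, by rw [u3]; exact hx, u3⟩)
        have r2 : pr p {ω | Tx (X ω) = t1 ∧ X ω = x} = pr p {ω | X ω = x} :=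
          pr_congr _ _ _ (fun ω => by
            simp only [Set.mem_setOf_eq]
            constructor
            · rintro ⟨_, u3⟩; exact u3
            · intro u3; exact ⟨by rw [u3]; exact hx, u3⟩)
        rw [r1, r2] at h
        exact h
      have hCy : ∀ t, gy t * pr p {ω | Ty (Y ω) = t2} = Gy t * pr p {ω | Y ω = y} := by
        intro t
        have h := hly t t2 y
        simp only [] at h
        have r1 : pr p {ω | T (W ω) = t ∧ Ty (Y ω) = t2 ∧ Y ω = y} =
            pr p {ω | T (W ω) = t ∧ Y ω = y} :=
          pr_congr _ _ _ (fun ω => by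
            simp only [Set.mem_setOf_eq]
            constructor
            · rintro ⟨u1, _, u3⟩; exact ⟨u1, u3⟩
            · rintro ⟨u1, u3⟩; exact ⟨u1, by rw [u3]; exact hy, u3⟩)
        have r2 : pr p {ω | Ty (Y ω) = t2 ∧ Y ω = y} = pr p {ω | Y ω = y} :=
          pr_congr _ _ _ (fun ω => by
            simp only [Set.mem_setOf_eq]
            constructor
            · rintro ⟨_, u3⟩; exact u3
            · intro u3; exact ⟨by rw [u3]; exact hy, u3⟩)
        rw [r1, r2] at h
        exact h
      have hq0 : ∀ t, q t = 0 → f t = 0 ∧ F t = 0 ∧ g t = 0 ∧ G t = 0 := by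
        intro t ht
        refine ⟨?_, ?_, ?_, ?_⟩ <;>
          exact pr_zero p hp0 _ {ω | T (W ω) = t} (fun ω hω => by
            first
              | exact hω.2.1
              | exact hω.1) ht
      have hu0 : pr p {ω | Tx (X ω) = t1} = 0 → ∀ t, G t = 0 := by
        intro hu t
        exact pr_zero p hp0 _ {ω | Tx (X ω) = t1} (fun ω hω => hω.2.1) hu
      have hv0 : pr p {ω | Ty (Y ω) = t2} = 0 → ∀ t, G t = 0 := by
        intro hv t
        exact pr_zero p hp0 _ {ω | Ty (Y ω) = t2} (fun ω hω => hω.2.2) hv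
      -- rewrite goal events into canonical form
      have egoal1 : pr p {ω | θ ω = a ∧ (Tx (X ω), Ty (Y ω)) = (t1, t2) ∧ (X ω, Y ω) = (x, y)} =
          pr p {ω | θ ω = a ∧ (X ω = x ∧ Y ω = y)} :=
        pr_congr _ _ _ (fun ω => by
          simp only [Set.mem_setOf_eq, Prod.mk.injEq]
          constructor
          · rintro ⟨u1, _, u3, u4⟩; exact ⟨u1, u3, u4⟩
          · rintro ⟨u1, u3, u4⟩
            exact ⟨u1, ⟨by rw [u3]; exact hx, by rw [u4]; exact hy⟩, u3, u4⟩)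
      have egoal2 : pr p {ω | (Tx (X ω), Ty (Y ω)) = (t1, t2)} =
          pr p {ω | Tx (X ω) = t1 ∧ Ty (Y ω) = t2} :=
        pr_congr _ _ _ (fun ω => by simp only [Set.mem_setOf_eq, Prod.mk.injEq])
      have egoal3 : pr p {ω | θ ω = a ∧ (Tx (X ω), Ty (Y ω)) = (t1, t2)} =
          pr p {ω | θ ω = a ∧ (Tx (X ω) = t1 ∧ Ty (Y ω) = t2)} :=
        pr_congr _ _ _ (fun ω => by simp only [Set.mem_setOf_eq, Prod.mk.injEq])
      have egoal4 : pr p {ω | (Tx (X ω), Ty (Y ω)) = (t1, t2) ∧ (X ω, Y ω) = (x, y)} =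
          pr p {ω | X ω = x ∧ Y ω = y} :=
        pr_congr _ _ _ (fun ω => by
          simp only [Set.mem_setOf_eq, Prod.mk.injEq]
          constructor
          · rintro ⟨_, u3, u4⟩; exact ⟨u3, u4⟩
          · rintro ⟨u3, u4⟩
            exact ⟨⟨by rw [u3]; exact hx, by rw [u4]; exact hy⟩, u3, u4⟩)
      rw [egoal1, egoal2, egoal3, egoal4]
      -- marginalize over t = T (W ω)
      have hSmem : ∀ ω : Ω, T (W ω) ∈ S := fun ω => Finset.mem_image_of_mem _ (Finset.mem_univ ω)
      have m1 : pr p {ω | θ ω = a ∧ (X ω = x ∧ Y ω = y)} = ∑ t ∈ S, f t := by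
        refine (pr_sum_fiber p _ _ (fun ω => T (W ω)) S ?_ ?_).symm
        · intro ω t _
          simp only [Set.mem_setOf_eq]
          tauto
        · intro ω _; exact hSmem ω
      have m2 : pr p {ω | Tx (X ω) = t1 ∧ Ty (Y ω) = t2} = ∑ t ∈ S, G t := by
        refine (pr_sum_fiber p _ _ (fun ω => T (W ω)) S ?_ ?_).symm
        · intro ω t _
          simp only [Set.mem_setOf_eq]
          tauto
        · intro ω _; exact hSmem ω
      have m3 : pr p {ω | θ ω = a ∧ (Tx (X ω) = t1 ∧ Ty (Y ω) = t2)} = ∑ t ∈ S, F t := by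
        refine (pr_sum_fiber p _ _ (fun ω => T (W ω)) S ?_ ?_).symm
        · intro ω t _
          simp only [Set.mem_setOf_eq]
          tauto
        · intro ω _; exact hSmem ω
      have m4 : pr p {ω | X ω = x ∧ Y ω = y} = ∑ t ∈ S, g t := by
        refine (pr_sum_fiber p _ _ (fun ω => T (W ω)) S ?_ ?_).symm
        · intro ω t _
          simp only [Set.mem_setOf_eq]
          tauto
        · intro ω _; exact hSmem ω
      rw [m1, m2, m3, m4]
      exact algebra_key S f F g G q A gx gy Gx Gy
        (pr p {ω | Tx (X ω) = t1}) (pr p {ω | Ty (Y ω) = t2})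
        (pr p {ω | X ω = x}) (pr p {ω | Y ω = y})
        hfq hFq hBq hDq hCx hCy hq0 hu0 hv0
    · -- Ty y ≠ t2
      have z1 : pr p {ω | θ ω = a ∧ (Tx (X ω), Ty (Y ω)) = (t1, t2) ∧ (X ω, Y ω) = (x, y)} = 0 :=
        pr_empty _ _ (fun ω hω => by
          simp only [Set.mem_setOf_eq, Prod.mk.injEq] at hω
          exact hy (by rw [← hω.2.2.2]; exact hω.2.1.2))
      have z2 : pr p {ω | (Tx (X ω), Ty (Y ω)) = (t1, t2) ∧ (X ω, Y ω) = (x, y)} = 0 :=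
        pr_empty _ _ (fun ω hω => by
          simp only [Set.mem_setOf_eq, Prod.mk.injEq] at hω
          exact hy (by rw [← hω.2.2]; exact hω.1.2))
      rw [z1, z2]; ring
  · -- Tx x ≠ t1
    have z1 : pr p {ω | θ ω = a ∧ (Tx (X ω), Ty (Y ω)) = (t1, t2) ∧ (X ω, Y ω) = (x, y)} = 0 :=
      pr_empty _ _ (fun ω hω => by
        simp only [Set.mem_setOf_eq, Prod.mk.injEq] at hω
        exact hx (by rw [← hω.2.2.1]; exact hω.2.1.1))
    have z2 : pr p {ω | (Tx (X ω), Ty (Y ω)) = (t1, t2) ∧ (X ω, Y ω) = (x, y)} = 0 :=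
      pr_empty _ _ (fun ω hω => by
        simp only [Set.mem_setOf_eq, Prod.mk.injEq] at hω
        exact hx (by rw [← hω.2.1]; exact hω.1.1))
    rw [z1, z2]; ring
end

section
/- Let (X,Y) have joint pmf p(x,y|θ) with T_y(Y) locally sufficient for θ. Then (T_x(X), T_y(Y)) is globally sufficient for θ if and only if there exist functions g(t₁|t₂,θ) and h(x,y) such that for all (x,y) and all θ, p(x|y,θ) = g(T_x(x)|T_y(y),θ)·h(x,y). -/
open scoped Classical BigOperators

/-- Theorem 2: assume `T_y(Y)` is locally sufficient for `θ` (Neyman–Fisher factorization of the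
marginal `p(y|θ)`). Then `(T_x(X), T_y(Y))` is globally sufficient for `θ` (factorization of the
joint `p(x,y|θ)`) if and only if the conditional pmf `p(x|y,θ) = p(x,y|θ)/p(y|θ)` factors as
`g(T_x(x) | T_y(y), θ) h(x,y)`. -/
theorem global_sufficiency_iff_conditional_factorization
    {Θ 𝒳 𝒴 T₁ T₂ : Type*} [Fintype 𝒳] [Fintype 𝒴]
    (p : Θ → 𝒳 → 𝒴 → ℝ)
    (hpos : ∀ θ x y, 0 ≤ p θ x y) (hsum : ∀ θ, (∑ x, ∑ y, p θ x y) = 1)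
    (Tx : 𝒳 → T₁) (Ty : 𝒴 → T₂)
    (hloc : ∃ (g : T₂ → Θ → ℝ) (h : 𝒴 → ℝ), ∀ θ y, (∑ x, p θ x y) = g (Ty y) θ * h y) :
    (∃ (G : T₁ → T₂ → Θ → ℝ) (H : 𝒳 → 𝒴 → ℝ),
        ∀ θ x y, p θ x y = G (Tx x) (Ty y) θ * H x y) ↔
      (∃ (g : T₁ → T₂ → Θ → ℝ) (h : 𝒳 → 𝒴 → ℝ),
        ∀ θ x y, p θ x y / (∑ x', p θ x' y) = g (Tx x) (Ty y) θ * h x y) := by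
  obtain ⟨gM, hM, hl⟩ := hloc
  constructor
  · rintro ⟨G, H, hGH⟩
    refine ⟨fun t₁ t₂ θ => G t₁ t₂ θ / gM t₂ θ, fun x y => H x y / hM y, fun θ x y => ?_⟩
    rw [hGH, hl, div_mul_div_comm]
  · rintro ⟨g, h, hgh⟩
    refine ⟨fun t₁ t₂ θ => g t₁ t₂ θ * gM t₂ θ, fun x y => h x y * hM y, fun θ x y => ?_⟩
    have key := hgh θ x y
    by_cases hS : (∑ x', p θ x' y) = 0
    · have hp0 : p θ x y = 0 := by
        have := (Finset.sum_eq_zero_iff_of_nonneg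
          (fun x' _ => hpos θ x' y)).mp hS x (Finset.mem_univ x)
        exact this
      have hg0 : gM (Ty y) θ * hM y = 0 := by rw [← hl θ y, hS]
      rw [hp0]
      rw [show (g (Tx x) (Ty y) θ * gM (Ty y) θ) * (h x y * hM y)
          = (g (Tx x) (Ty y) θ * h x y) * (gM (Ty y) θ * hM y) by ring, hg0, mul_zero]
    · field_simp at key
      rw [show (g (Tx x) (Ty y) θ * gM (Ty y) θ) * (h x y * hM y)
          = (g (Tx x) (Ty y) θ * h x y) * (gM (Ty y) θ * hM y) by ring, ← hl θ y]
      linarith [key]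
end

section
/- Let (Xᵢ,Yᵢ), i=1,…,n be i.i.d. with joint density p(x,y|θ) = 2 on {θ < x < θ+1, θ < y < x} and 0 otherwise. Then the conditional density p(x₁,…,xₙ | y₁,…,yₙ, θ) equals ∏ᵢ 1/(θ+1−yᵢ) on {xᵢ > yᵢ for all i, max_i xᵢ < θ+1}, and consequently M = max_i Xᵢ is a conditionally sufficient statistic for θ given (Y₁,…,Yₙ). -/
open scoped Classical BigOperators

/-- The joint density `p(x, y | θ)`: equal to `2` on `{θ < x < θ+1, θ < y < x}`, `0` otherwise. -/
noncomputable def fdens (θ x y : ℝ) : ℝ :=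
  if θ < x ∧ x < θ + 1 ∧ θ < y ∧ y < x then 2 else 0

/-- Example 3: for `(Xᵢ, Yᵢ)` i.i.d. with density `p(x,y|θ) = 2` on `{θ < x < θ+1, θ < y < x}`,
the conditional density `p(x₁,…,xₙ | y₁,…,yₙ, θ)` equals `∏ᵢ 1/(θ+1-yᵢ)` on
`{yᵢ < xᵢ ∀ i, maxᵢ xᵢ < θ + 1}`, and consequently `M = maxᵢ Xᵢ` is conditionally sufficient
for `θ` given `(Y₁,…,Yₙ)` (conditional Neyman–Fisher factorization of the joint density). -/
theorem max_conditionally_sufficient (n : ℕ) (hn : 0 < n) :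
    (∀ (θ : ℝ) (x y : Fin n → ℝ),
        (∀ i, θ < y i ∧ y i < x i) → (∀ i, x i < θ + 1) →
        (∏ i, fdens θ (x i) (y i)) / (∏ i, 2 * (θ + 1 - y i)) =
          ∏ i, 1 / (θ + 1 - y i)) ∧
      (∃ (g : ℝ → (Fin n → ℝ) → ℝ → ℝ) (h : (Fin n → ℝ) → (Fin n → ℝ) → ℝ),
        ∀ (θ : ℝ) (x y : Fin n → ℝ),
          (∏ i, fdens θ (x i) (y i)) =
            g (Finset.univ.sup' ⟨⟨0, hn⟩, Finset.mem_univ _⟩ x) y θ * h x y) := by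
  constructor
  · intro θ x y h1 h2
    have hf : ∀ i, fdens θ (x i) (y i) = 2 := by
      intro i
      have h3 := (h1 i).1; have h4 := (h1 i).2; have h5 := h2 i
      simp [fdens, lt_trans h3 h4, h4, h5, h3]
    rw [Finset.prod_congr rfl (fun i _ => hf i), ← Finset.prod_div_distrib]
    apply Finset.prod_congr rfl
    intro i _
    have hy : 0 < θ + 1 - y i := by
      have h3 := (h1 i).1; have h4 := (h1 i).2; have h5 := h2 i; linarith
    rw [div_eq_div_iff (by linarith) (by linarith)]
    ring
  · refine ⟨fun M y θ => if (M < θ + 1 ∧ ∀ i, θ < y i) then 1 else 0,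
      fun x y => if (∀ i, y i < x i) then 2 ^ n else 0, ?_⟩
    intro θ x y
    dsimp only
    by_cases H : ∀ i, θ < x i ∧ x i < θ + 1 ∧ θ < y i ∧ y i < x i
    · have hA : ∀ i, y i < x i := fun i => (H i).2.2.2
      have hB : Finset.univ.sup' ⟨⟨0, hn⟩, Finset.mem_univ _⟩ x < θ + 1 := by
        exact (Finset.sup'_lt_iff _).mpr (fun i _ => (H i).2.1)
      have hC : ∀ i, θ < y i := fun i => (H i).2.2.1
      rw [if_pos ⟨hB, hC⟩, if_pos hA,
        Finset.prod_congr rfl (fun i _ => by simp [fdens, H i] : ∀ i ∈ Finset.univ, fdens θ (x i) (y i) = 2)]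
      simp
    · push_neg at H
      obtain ⟨i, hi⟩ := H
      have hz : (∏ i, fdens θ (x i) (y i)) = 0 := by
        apply Finset.prod_eq_zero (Finset.mem_univ i)
        simp only [fdens]
        refine if_neg ?_
        rintro ⟨a, b, c, d⟩
        exact absurd d (not_lt.2 (hi a b c))
      rw [hz]
      by_cases hA : ∀ j, y j < x j
      · rw [if_pos hA, if_neg, zero_mul]
        rintro ⟨hB, hC⟩
        exact absurd (hA i) (not_lt.2 (hi (lt_trans (hC i) (hA i)) (lt_of_le_of_lt (Finset.le_sup' x (Finset.mem_univ i)) hB) (hC i)))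
      · rw [if_neg hA, mul_zero]
end
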